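/- Let (M;ρ) be a module over a Lie conformal algebra A, and let μ̂ denote the semidirect product Lie conformal algebra structure on A ⋉_ρ M. A ℂ[∂]-module homomorphism T : M → A is a relative Rota–Baxter operator if and only if its lift T̂ satisfies the Maurer–Cartan equation [T̂,T̂]_{μ̂} = 0 in the graded Lie algebra (C^*(M,A), [·,·]_{μ̂}), where [f₁,f₂]_{μ̂} = (-1)^{m-1}[[μ̂,f̂₁]_NR,f̂₂]_NR for f₁ ∈ C^m(M,A). -/

import Mathlib

/- ------------------------------------------------------------------
Common definitions: λ-polynomials with coefficients in a ℂ[∂]-module,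
Lie conformal algebras, modules, cochain complexes, the
Nijenhuis–Richardson bracket, bidegrees, lifts and twistings.
------------------------------------------------------------------- -/

open scoped Classical

noncomputable section

namespace LCAF

/-- `MP k M` : `M`-valued polynomials in the `k` variables `λ₀, …, λ_{k-1}`,
encoded as finitely supported functions on multi-indices. -/
abbrev MP (k : ℕ) (M : Type*) [AddCommGroup M] : Type _ :=
  (Fin k →₀ ℕ) →₀ M

variable {A B M N A₁ A₂ : Type*}

section PolyOps

variable [AddCommGroup M] [Module ℂ M] [AddCommGroup N] [Module ℂ N]

/-- Apply a linear map to all coefficients of a polynomial. -/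
def mapCoeff {k : ℕ} (g : M →ₗ[ℂ] N) (p : MP k M) : MP k N :=
  p.mapRange g (map_zero g)

/-- Multiplication by the monomial `λ^α`. -/
def monMul {k : ℕ} (α : Fin k →₀ ℕ) (p : MP k M) : MP k M :=
  Finsupp.mapDomain (fun β => α + β) p

/-- The variable `λᵢ` as a scalar polynomial. -/
def Xv {k : ℕ} (i : Fin k) : MP k ℂ :=
  Finsupp.single (Finsupp.single i 1) (1 : ℂ)

/-- Multiplication of an `M`-valued polynomial by a scalar polynomial. -/
def scaleP {k : ℕ} (q : MP k ℂ) (p : MP k M) : MP k M :=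
  q.sum fun α r => r • monMul α p

/-- The operator `q + c∂` acting on `M`-valued polynomials. -/
def opnd {k : ℕ} (D : M →ₗ[ℂ] M) (q : MP k ℂ) (c : ℂ) : MP k M → MP k M :=
  fun p => scaleP q p + c • mapCoeff D p

/-- Substitution: in an `M`-valued polynomial in `k` variables, substitute the
`i`-th variable by the affine expression `q i + (c i)·∂` (with `∂ = D` acting on
coefficients), landing in polynomials in `k'` new variables. -/
def substFun {k k' : ℕ} (D : M →ₗ[ℂ] M) (q : Fin k → MP k' ℂ) (c : Fin k → ℂ)
    (p : MP k M) : MP k' M :=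
  p.sum fun α m =>
    ((List.ofFn fun i : Fin k => (opnd D (q i) (c i))^[α i]).foldr (· ∘ ·) id)
      (Finsupp.single 0 m)

/-- Renaming of variables. -/
def renameV {k k' : ℕ} (h : Fin k → Fin k') (p : MP k M) : MP k' M :=
  Finsupp.mapDomain (fun α => Finsupp.mapDomain h α) p

/-- The substitution `λ ↦ -λ-∂` in one variable. -/
def sub1 (D : M →ₗ[ℂ] M) (p : MP 1 M) : MP 1 M :=
  substFun D (fun _ => -(Xv 0)) (fun _ => -1) p

/-- The multi-index of the single variable `λ` in one variable. -/
def lam1 : Fin 1 →₀ ℕ := Finsupp.single 0 1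

end PolyOps

section Binary

variable [AddCommGroup M] [Module ℂ M]

/-- `F` with its variable substituted by the expression `q + c ∂`, in two
variables `λ = λ₀`, `μ = λ₁`. -/
def opE (D : M →ₗ[ℂ] M) (F : A → B → MP 1 M) (q : MP 2 ℂ) (c : ℂ) (a : A) (b : B) :
    MP 2 M :=
  substFun D (fun _ => q) (fun _ => c) (F a b)

/-- `F` applied with polynomial second argument (extended coefficientwise). -/
def opR [AddCommGroup B] [Module ℂ B] (D : M →ₗ[ℂ] M) (F : A → B → MP 1 M)
    (q : MP 2 ℂ) (c : ℂ) (a : A) (p : MP 2 B) : MP 2 M :=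
  p.sum fun β x => monMul β (opE D F q c a x)

/-- `F` applied with polynomial first argument (extended coefficientwise). -/
def opL [AddCommGroup A] [Module ℂ A] (D : M →ₗ[ℂ] M) (F : A → B → MP 1 M)
    (q : MP 2 ℂ) (c : ℂ) (p : MP 2 A) (b : B) : MP 2 M :=
  p.sum fun β x => monMul β (opE D F q c x b)

end Binary

section LCA

variable [AddCommGroup A] [Module ℂ A] [AddCommGroup M] [Module ℂ M]

/-- `(A, D, br)` is a Lie conformal algebra: `br a b` is `[a_λ b]`, an `A`-valued
polynomial in one variable `λ`. -/
structure IsLCA (D : A →ₗ[ℂ] A) (br : A → A → MP 1 A) : Prop where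
  add_left : ∀ a b c : A, br (a + b) c = br a c + br b c
  smul_left : ∀ (r : ℂ) (a b : A), br (r • a) b = r • br a b
  add_right : ∀ a b c : A, br a (b + c) = br a b + br a c
  smul_right : ∀ (r : ℂ) (a b : A), br a (r • b) = r • br a b
  sesq_left : ∀ a b : A, br (D a) b = -(monMul lam1 (br a b))
  sesq_right : ∀ a b : A, br a (D b) = monMul lam1 (br a b) + mapCoeff D (br a b)
  skew : ∀ a b : A, br a b = -(sub1 D (br b a))
  jacobi : ∀ a b c : A,
    opR D br (Xv 0) 0 a (renameV (fun _ => (1 : Fin 2)) (br b c)) =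
      opL D br (Xv 0 + Xv 1) 0 (renameV (fun _ => (0 : Fin 2)) (br a b)) c +
        opR D br (Xv 1) 0 b (renameV (fun _ => (0 : Fin 2)) (br a c))

/-- `(M, DM, rho)` is a module over the Lie conformal algebra `(A, D, br)`. -/
structure IsLCAMod (D : A →ₗ[ℂ] A) (br : A → A → MP 1 A)
    (DM : M →ₗ[ℂ] M) (rho : A → M → MP 1 M) : Prop where
  add_left : ∀ (a b : A) (m : M), rho (a + b) m = rho a m + rho b m
  smul_left : ∀ (r : ℂ) (a : A) (m : M), rho (r • a) m = r • rho a m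
  add_right : ∀ (a : A) (m n : M), rho a (m + n) = rho a m + rho a n
  smul_right : ∀ (r : ℂ) (a : A) (m : M), rho a (r • m) = r • rho a m
  d_left : ∀ (a : A) (m : M), rho (D a) m = -(monMul lam1 (rho a m))
  d_right : ∀ (a : A) (m : M),
    rho a (DM m) = monMul lam1 (rho a m) + mapCoeff DM (rho a m)
  comm : ∀ (a b : A) (m : M),
    opR DM rho (Xv 0) 0 a (renameV (fun _ => (1 : Fin 2)) (rho b m)) -
      opR DM rho (Xv 1) 0 b (renameV (fun _ => (0 : Fin 2)) (rho a m)) =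
    opL DM rho (Xv 0 + Xv 1) 0 (renameV (fun _ => (0 : Fin 2)) (br a b)) m

/-- `phi` is a 2-cocycle of `(A, D, br)` with coefficients in the module
`(M, DM, rho)`. -/
structure IsTwoCocycle (D : A →ₗ[ℂ] A) (br : A → A → MP 1 A)
    (DM : M →ₗ[ℂ] M) (rho : A → M → MP 1 M) (phi : A → A → MP 1 M) : Prop where
  add_left : ∀ (a b c : A), phi (a + b) c = phi a c + phi b c
  smul_left : ∀ (r : ℂ) (a b : A), phi (r • a) b = r • phi a b
  add_right : ∀ (a b c : A), phi a (b + c) = phi a b + phi a c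
  smul_right : ∀ (r : ℂ) (a b : A), phi a (r • b) = r • phi a b
  sesq_left : ∀ a b : A, phi (D a) b = -(monMul lam1 (phi a b))
  sesq_right : ∀ a b : A, phi a (D b) = monMul lam1 (phi a b) + mapCoeff DM (phi a b)
  skew : ∀ a b : A, phi a b = -(sub1 DM (phi b a))
  cocycle : ∀ a b c : A,
    opR DM rho (Xv 0) 0 a (renameV (fun _ => (1 : Fin 2)) (phi b c))
      - opR DM rho (Xv 1) 0 b (renameV (fun _ => (0 : Fin 2)) (phi a c))
      + opR DM rho (-(Xv 0) - Xv 1) (-1) c (renameV (fun _ => (0 : Fin 2)) (phi a b))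
      + opR DM phi (Xv 0) 0 a (renameV (fun _ => (1 : Fin 2)) (br b c))
      - opR DM phi (Xv 1) 0 b (renameV (fun _ => (0 : Fin 2)) (br a c))
      - opL DM phi (Xv 0 + Xv 1) 0 (renameV (fun _ => (0 : Fin 2)) (br a b)) c = 0

/-- `T : M → A` is a relative Rota–Baxter operator. -/
def IsRB (br : A → A → MP 1 A) (DM : M →ₗ[ℂ] M) (rho : A → M → MP 1 M)
    (T : M →ₗ[ℂ] A) : Prop :=
  ∀ m n : M, br (T m) (T n) = mapCoeff T (rho (T m) n - sub1 DM (rho (T n) m))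

/-- `T : M → A` is a `φ`-twisted relative Rota–Baxter operator. -/
def IsTwistedRB (br : A → A → MP 1 A) (DM : M →ₗ[ℂ] M) (rho : A → M → MP 1 M)
    (phi : A → A → MP 1 M) (T : M →ₗ[ℂ] A) : Prop :=
  ∀ m n : M, br (T m) (T n) =
    mapCoeff T (rho (T m) n - sub1 DM (rho (T n) m) + phi (T m) (T n))

/-- Combine an `A`-valued and an `M`-valued polynomial into an `A × M`-valued one. -/
def pairP {k : ℕ} (p : MP k A) (q : MP k M) : MP k (A × M) :=
  Finsupp.mapRange (fun a => (a, (0 : M))) rfl p +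
    Finsupp.mapRange (fun m => ((0 : A), m)) rfl q

/-- The (φ-twisted) semidirect product λ-bracket on `A × M`. -/
def sdBr (br : A → A → MP 1 A) (DM : M →ₗ[ℂ] M) (rho : A → M → MP 1 M)
    (phi : A → A → MP 1 M) : A × M → A × M → MP 1 (A × M) :=
  fun x y => pairP (br x.1 y.1) (rho x.1 y.2 - sub1 DM (rho y.1 x.2) + phi x.1 y.1)

end LCA

section NS

variable [AddCommGroup A] [Module ℂ A]

/-- The λ-bracket `[a_λ b] = a∘_λ b - b∘_{-λ-∂} a + a∨_λ b` attached to a pair of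
λ-multiplications. -/
def lieNS (D : A →ₗ[ℂ] A) (o v : A → A → MP 1 A) : A → A → MP 1 A :=
  fun a b => o a b - sub1 D (o b a) + v a b

/-- `(A, ∘_λ, ∨_λ)` is an NS-Lie conformal algebra. -/
structure IsNSLie (D : A →ₗ[ℂ] A) (o v : A → A → MP 1 A) : Prop where
  o_add_left : ∀ a b c : A, o (a + b) c = o a c + o b c
  o_smul_left : ∀ (r : ℂ) (a b : A), o (r • a) b = r • o a b
  o_add_right : ∀ a b c : A, o a (b + c) = o a b + o a c
  o_smul_right : ∀ (r : ℂ) (a b : A), o a (r • b) = r • o a b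
  o_sesq_left : ∀ a b : A, o (D a) b = -(monMul lam1 (o a b))
  o_sesq_right : ∀ a b : A, o a (D b) = monMul lam1 (o a b) + mapCoeff D (o a b)
  v_add_left : ∀ a b c : A, v (a + b) c = v a c + v b c
  v_smul_left : ∀ (r : ℂ) (a b : A), v (r • a) b = r • v a b
  v_add_right : ∀ a b c : A, v a (b + c) = v a b + v a c
  v_smul_right : ∀ (r : ℂ) (a b : A), v a (r • b) = r • v a b
  v_sesq_left : ∀ a b : A, v (D a) b = -(monMul lam1 (v a b))
  v_sesq_right : ∀ a b : A, v a (D b) = monMul lam1 (v a b) + mapCoeff D (v a b)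
  v_skew : ∀ a b : A, v a b = -(sub1 D (v b a))
  ns1 : ∀ a b c : A,
    opL D o (Xv 0 + Xv 1) 0 (renameV (fun _ => (0 : Fin 2)) (o a b)) c
      - opR D o (Xv 0) 0 a (renameV (fun _ => (1 : Fin 2)) (o b c))
      - opL D o (Xv 0 + Xv 1) 0 (renameV (fun _ => (1 : Fin 2)) (o b a)) c
      + opR D o (Xv 1) 0 b (renameV (fun _ => (0 : Fin 2)) (o a c))
      + opL D o (Xv 0 + Xv 1) 0 (renameV (fun _ => (0 : Fin 2)) (v a b)) c = 0
  ns2 : ∀ a b c : A,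
    opR D v (Xv 0) 0 a (renameV (fun _ => (1 : Fin 2)) (lieNS D o v b c))
      - opL D v (Xv 0 + Xv 1) 0 (renameV (fun _ => (0 : Fin 2)) (lieNS D o v a b)) c
      - opR D v (Xv 1) 0 b (renameV (fun _ => (0 : Fin 2)) (lieNS D o v a c))
      + opR D o (Xv 0) 0 a (renameV (fun _ => (1 : Fin 2)) (v b c))
      - opR D o (Xv 1) 0 b (renameV (fun _ => (0 : Fin 2)) (v a c))
      + opR D o (-(Xv 0) - Xv 1) (-1) c (renameV (fun _ => (0 : Fin 2)) (v a b)) = 0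

/-- `(A, ≻_λ, ≺_λ, ⋎_λ)` is a conformal NS-algebra. -/
structure IsConfNS (D : A →ₗ[ℂ] A) (su pr cu : A → A → MP 1 A) : Prop where
  su_add_left : ∀ a b c : A, su (a + b) c = su a c + su b c
  su_smul_left : ∀ (r : ℂ) (a b : A), su (r • a) b = r • su a b
  su_add_right : ∀ a b c : A, su a (b + c) = su a b + su a c
  su_smul_right : ∀ (r : ℂ) (a b : A), su a (r • b) = r • su a b
  su_sesq_left : ∀ a b : A, su (D a) b = -(monMul lam1 (su a b))
  su_sesq_right : ∀ a b : A, su a (D b) = monMul lam1 (su a b) + mapCoeff D (su a b)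
  pr_add_left : ∀ a b c : A, pr (a + b) c = pr a c + pr b c
  pr_smul_left : ∀ (r : ℂ) (a b : A), pr (r • a) b = r • pr a b
  pr_add_right : ∀ a b c : A, pr a (b + c) = pr a b + pr a c
  pr_smul_right : ∀ (r : ℂ) (a b : A), pr a (r • b) = r • pr a b
  pr_sesq_left : ∀ a b : A, pr (D a) b = -(monMul lam1 (pr a b))
  pr_sesq_right : ∀ a b : A, pr a (D b) = monMul lam1 (pr a b) + mapCoeff D (pr a b)
  cu_add_left : ∀ a b c : A, cu (a + b) c = cu a c + cu b c
  cu_smul_left : ∀ (r : ℂ) (a b : A), cu (r • a) b = r • cu a b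
  cu_add_right : ∀ a b c : A, cu a (b + c) = cu a b + cu a c
  cu_smul_right : ∀ (r : ℂ) (a b : A), cu a (r • b) = r • cu a b
  cu_sesq_left : ∀ a b : A, cu (D a) b = -(monMul lam1 (cu a b))
  cu_sesq_right : ∀ a b : A, cu a (D b) = monMul lam1 (cu a b) + mapCoeff D (cu a b)
  ax1 : ∀ x y z : A,
    opR D su (Xv 0) 0 x (renameV (fun _ => (1 : Fin 2)) (su y z)) =
      opL D su (Xv 0 + Xv 1) 0
        (renameV (fun _ => (0 : Fin 2)) (su x y + pr x y + cu x y)) z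
  ax2 : ∀ x y z : A,
    opR D pr (Xv 0) 0 x (renameV (fun _ => (1 : Fin 2)) (su y z + pr y z + cu y z)) =
      opL D pr (Xv 0 + Xv 1) 0 (renameV (fun _ => (0 : Fin 2)) (pr x y)) z
  ax3 : ∀ x y z : A,
    opR D su (Xv 0) 0 x (renameV (fun _ => (1 : Fin 2)) (pr y z)) =
      opL D pr (Xv 0 + Xv 1) 0 (renameV (fun _ => (0 : Fin 2)) (su x y)) z
  ax4 : ∀ x y z : A,
    opR D su (Xv 0) 0 x (renameV (fun _ => (1 : Fin 2)) (cu y z)) -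
        opL D cu (Xv 0 + Xv 1) 0
          (renameV (fun _ => (0 : Fin 2)) (su x y + pr x y + cu x y)) z =
      opL D pr (Xv 0 + Xv 1) 0 (renameV (fun _ => (0 : Fin 2)) (cu x y)) z -
        opR D cu (Xv 0) 0 x (renameV (fun _ => (1 : Fin 2)) (su y z + pr y z + cu y z))

/-- `N` is a Nijenhuis operator on the Lie conformal algebra `(A, D, br)`. -/
def IsNijenhuis (D : A →ₗ[ℂ] A) (br : A → A → MP 1 A) (N : A →ₗ[ℂ] A) : Prop :=
  (∀ a : A, N (D a) = D (N a)) ∧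
  ∀ a b : A, br (N a) (N b) =
    mapCoeff N (br (N a) b + br a (N b) - mapCoeff N (br a b))

/-- The deformed bracket `[a_λ b]_N`. -/
def deformBr (br : A → A → MP 1 A) (N : A →ₗ[ℂ] A) : A → A → MP 1 A :=
  fun a b => br (N a) b + br a (N b) - mapCoeff N (br a b)

end NS

/- ------------------------  cochains  ------------------------ -/

/-- `RawC n A M` : the underlying maps of cochains in `C^{n+1}(A, M)`:
`n+1` arguments from `A`, values in `M`-valued polynomials in `n` variables. -/
abbrev RawC (n : ℕ) (A : Type*) (M : Type*) [AddCommGroup M] : Type _ :=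
  (Fin (n + 1) → A) → MP n M

section CochainDefs

variable [AddCommGroup A] [Module ℂ A] [AddCommGroup M] [Module ℂ M]

/-- The scalar-polynomial part of the expression for `λ_t`, where the last
variable is replaced by `λ† = -λ₀ - ⋯ - λ_{N-1} - ∂`. -/
def exprQ {N : ℕ} (t : Fin (N + 1)) : MP N ℂ :=
  if h : t = Fin.last N then -(∑ i : Fin N, Xv i) else Xv (t.castPred h)

/-- The `∂`-coefficient of the expression for `λ_t`. -/
def exprC {N : ℕ} (t : Fin (N + 1)) : ℂ :=
  if t = Fin.last N then -1 else 0

/-- `f` is a cochain in `C^{n+1}(A, M)` (conformal sesquilinearity, multilinearity,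
and skew-symmetry with the substitution `λ_{last} ↦ λ†`). -/
structure IsCochain {n : ℕ} (DA : A →ₗ[ℂ] A) (DM : M →ₗ[ℂ] M) (f : RawC n A M) :
    Prop where
  map_add : ∀ (a : Fin (n + 1) → A) (i : Fin (n + 1)) (x y : A),
    f (Function.update a i (x + y)) =
      f (Function.update a i x) + f (Function.update a i y)
  map_smul : ∀ (a : Fin (n + 1) → A) (i : Fin (n + 1)) (r : ℂ) (x : A),
    f (Function.update a i (r • x)) = r • f (Function.update a i x)
  sesq : ∀ (a : Fin (n + 1) → A) (i : Fin n),
    f (Function.update a i.castSucc (DA (a i.castSucc))) =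
      -(monMul (Finsupp.single i 1) (f a))
  sesq_last : ∀ a : Fin (n + 1) → A,
    f (Function.update a (Fin.last n) (DA (a (Fin.last n)))) =
      (∑ i : Fin n, monMul (Finsupp.single i 1) (f a)) + mapCoeff DM (f a)
  skew : ∀ (σ : Equiv.Perm (Fin (n + 1))) (a : Fin (n + 1) → A),
    f a = ((Equiv.Perm.sign σ : ℤˣ) : ℤ) •
      substFun DM (fun j : Fin n => exprQ (σ j.castSucc))
        (fun j : Fin n => exprC (σ j.castSucc)) (f (a ∘ σ))

/-- `(t, N-t)`-unshuffles : permutations strictly increasing on the first `t`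
positions and on the remaining positions. -/
def IsUnsh {N : ℕ} (t : ℕ) (σ : Equiv.Perm (Fin N)) : Prop :=
  ∀ i j : Fin N, i < j → (j.val < t ∨ t ≤ i.val) → σ i < σ j

/-- The `⋄`-product (unshuffle-sum insertion) of cochains:
`f ∈ C^{p+1}(A,A)`, `g ∈ C^{q+1}(A,A)`, `f⋄g ∈ C^{p+q+1}(A,A)`. -/
def diamond {p q : ℕ} (DA : A →ₗ[ℂ] A) (f : RawC p A A) (g : RawC q A A) :
    RawC (p + q) A A := fun a =>
  ∑ σ ∈ Finset.univ.filter (fun σ : Equiv.Perm (Fin (p + q + 1)) => IsUnsh (q + 1) σ),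
    ((Equiv.Perm.sign σ : ℤˣ) : ℤ) •
      substFun DA
        (fun v : Fin (p + q) =>
          if v.val = q then
            ∑ i : Fin (q + 1), exprQ (σ (Fin.castLE (by omega) i))
          else exprQ (σ v.castSucc))
        (fun v : Fin (p + q) =>
          if v.val = q then
            ∑ i : Fin (q + 1), exprC (σ (Fin.castLE (by omega) i))
          else exprC (σ v.castSucc))
        ((g fun i : Fin (q + 1) => a (σ (Fin.castLE (by omega) i))).sum fun β x =>
          monMul
            (Finsupp.mapDomain
              (fun i : Fin q => (Fin.cast (by omega) (Fin.castAdd p i) : Fin (p + q))) β)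
            (renameV (fun j : Fin p => (Fin.cast (by omega) (Fin.natAdd q j) : Fin (p + q)))
              (f (Fin.cons x fun j : Fin p =>
                a (σ (Fin.cast (by omega) (Fin.natAdd (q + 1) j)))))))

/-- Transport a raw cochain along an equality of degrees. -/
def castRaw {m n : ℕ} (h : m = n) (f : RawC m A M) : RawC n A M := h ▸ f

/-- The Nijenhuis–Richardson bracket `[f,g] = f⋄g - (-1)^{pq} g⋄f`. -/
def nr {p q : ℕ} (DA : A →ₗ[ℂ] A) (f : RawC p A A) (g : RawC q A A) :
    RawC (p + q) A A :=
  diamond DA f g - ((-1 : ℤ)) ^ (p * q) • castRaw (Nat.add_comm q p) (diamond DA g f)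

end CochainDefs

section Bidegree

variable [AddCommGroup A₁] [Module ℂ A₁] [AddCommGroup A₂] [Module ℂ A₂]

/-- `x` is a pure element: in `A₁` (if `b`) or in `A₂` (if `¬b`). -/
def IsPure (x : A₁ × A₂) (b : Bool) : Prop :=
  if b then x.2 = 0 else x.1 = 0

/-- `f ∈ C^{n+1}(A₁⊕A₂, A₁⊕A₂)` has bidegree `k|l`. -/
def HasBidegree {n : ℕ} (f : RawC n (A₁ × A₂) (A₁ × A₂)) (k l : ℤ) : Prop :=
  k + l = (n : ℤ) ∧
  ∀ (P : Fin (n + 1) → Bool) (a : Fin (n + 1) → A₁ × A₂),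
    (∀ i, IsPure (a i) (P i)) →
    ((((Finset.univ.filter fun i => P i = true).card : ℤ) = k + 1 →
        ∀ β, ((f a) β).2 = 0) ∧
      ((((Finset.univ.filter fun i => P i = true).card : ℤ) = k) →
        ∀ β, ((f a) β).1 = 0) ∧
      (((((Finset.univ.filter fun i => P i = true).card : ℤ) ≠ k + 1) ∧
        (((Finset.univ.filter fun i => P i = true).card : ℤ) ≠ k)) → f a = 0))

/-- The lift of `f ∈ C^{n+1}(A₂, A₁)` to a cochain on `A₁ ⊕ A₂`. -/
def liftC {n : ℕ} (f : RawC n A₂ A₁) : RawC n (A₁ × A₂) (A₁ × A₂) :=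
  fun x => Finsupp.mapRange (fun a => (a, (0 : A₂))) rfl (f fun i => (x i).2)

/-- Recover `f ∈ C^{n+1}(A₂, A₁)` from (a lift of) a cochain on `A₁ ⊕ A₂`. -/
def downC {n : ℕ} (g : RawC n (A₁ × A₂) (A₁ × A₂)) : RawC n A₂ A₁ :=
  fun v => Finsupp.mapRange Prod.fst rfl (g fun i => ((0 : A₁), v i))

/-- The lift of a `ℂ[∂]`-module homomorphism `H : A₂ → A₁` as a `1`-cochain on
`A₁ ⊕ A₂`. -/
def hatHom (H : A₂ →ₗ[ℂ] A₁) : RawC 0 (A₁ × A₂) (A₁ × A₂) :=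
  fun x => Finsupp.single 0 (H ((x 0).2), (0 : A₂))

/-- `H : A₂ → A₁` viewed as an element of `C^1(A₂, A₁)`. -/
def hatC1 (H : A₂ →ₗ[ℂ] A₁) : RawC 0 A₂ A₁ :=
  fun v => Finsupp.single 0 (H (v 0))

/-- The structure map of a λ-bracket as a 2-cochain. -/
def toC2 {A : Type*} [AddCommGroup A] (br : A → A → MP 1 A) : RawC 1 A A :=
  fun a => br (a 0) (a 1)

/-- `l₁ = d_{μ̂₂}` on `C^*(A₂, A₁)`. -/
def ell1 (DA : (A₁ × A₂) →ₗ[ℂ] (A₁ × A₂)) (mu2 : RawC 1 (A₁ × A₂) (A₁ × A₂))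
    {n : ℕ} (f : RawC n A₂ A₁) : RawC (n + 1) A₂ A₁ :=
  downC (castRaw (show 1 + n = n + 1 by omega) (nr DA mu2 (liftC f)))

/-- `l₂ = [·,·]_{μ̂₁}` on `C^*(A₂, A₁)`. -/
def ell2 (DA : (A₁ × A₂) →ₗ[ℂ] (A₁ × A₂)) (mu1 : RawC 1 (A₁ × A₂) (A₁ × A₂))
    {m n : ℕ} (f : RawC m A₂ A₁) (g : RawC n A₂ A₁) : RawC (m + n + 1) A₂ A₁ :=
  ((-1 : ℤ)) ^ m •
    downC (castRaw (show 1 + m + n = m + n + 1 by omega)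
      (nr DA (nr DA mu1 (liftC f)) (liftC g)))

/-- `l₃ = [·,·,·]_{φ̂₁}` on `C^*(A₂, A₁)`. -/
def ell3 (DA : (A₁ × A₂) →ₗ[ℂ] (A₁ × A₂)) (phi1 : RawC 1 (A₁ × A₂) (A₁ × A₂))
    {m n k : ℕ} (f : RawC m A₂ A₁) (g : RawC n A₂ A₁) (h : RawC k A₂ A₁) :
    RawC (m + n + k + 1) A₂ A₁ :=
  ((-1 : ℤ)) ^ n •
    downC (castRaw (show 1 + m + n + k = m + n + k + 1 by omega)
      (nr DA (nr DA (nr DA phi1 (liftC f)) (liftC g)) (liftC h)))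

/-- `Π` is a twilled Lie conformal algebra structure on `A₁ ⊕ A₂`. -/
def IsTwilledStr (DA : (A₁ × A₂) →ₗ[ℂ] (A₁ × A₂))
    (Pi : RawC 1 (A₁ × A₂) (A₁ × A₂)) : Prop :=
  IsCochain DA DA Pi ∧ nr DA Pi Pi = 0 ∧
    ∃ m1 m2 : RawC 1 (A₁ × A₂) (A₁ × A₂),
      HasBidegree m1 1 0 ∧ HasBidegree m2 0 1 ∧ Pi = m1 + m2

/-- `Π` is a quasi-twilled Lie conformal algebra structure on `A₁ ⊕ A₂`. -/
def IsQuasiTwilledStr (DA : (A₁ × A₂) →ₗ[ℂ] (A₁ × A₂))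
    (Pi : RawC 1 (A₁ × A₂) (A₁ × A₂)) : Prop :=
  IsCochain DA DA Pi ∧ nr DA Pi Pi = 0 ∧
    ∃ p1 m1 m2 : RawC 1 (A₁ × A₂) (A₁ × A₂),
      HasBidegree p1 2 (-1) ∧ HasBidegree m1 1 0 ∧ HasBidegree m2 0 1 ∧
        Pi = p1 + m1 + m2

end Bidegree

section Twist

variable [AddCommGroup A] [Module ℂ A]

/-- The twisting `Π^H = e^{X_Ĥ}(Π)` of a `2`-cochain by (the lift of) a
`ℂ[∂]`-module homomorphism. -/
def twist (DA : A →ₗ[ℂ] A) (Pi : RawC 1 A A) (hH : RawC 0 A A) : RawC 1 A A :=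
  Pi + nr DA Pi hH + (2 : ℂ)⁻¹ • nr DA (nr DA Pi hH) hH
    + (6 : ℂ)⁻¹ • nr DA (nr DA (nr DA Pi hH) hH) hH

end Twist

end LCAF

namespace LCAF

section GradedStructures

variable {A₁ A₂ : Type*} [AddCommGroup A₁] [Module ℂ A₁] [AddCommGroup A₂] [Module ℂ A₂]

/-- The subspace of `⊕ₙ RawC n A₂ A₁` cut out by `P` (placing `RawC n` in degree
`n+1`), equipped with `d` and `br`, is a differential graded Lie algebra. -/
structure IsDGLAOn
    (P : ∀ {n : ℕ}, RawC n A₂ A₁ → Prop)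
    (d : ∀ {n : ℕ}, RawC n A₂ A₁ → RawC (n + 1) A₂ A₁)
    (br : ∀ {m n : ℕ}, RawC m A₂ A₁ → RawC n A₂ A₁ → RawC (m + n + 1) A₂ A₁) :
    Prop where
  mem_zero : ∀ {n : ℕ}, P (0 : RawC n A₂ A₁)
  mem_add : ∀ {n : ℕ} (f g : RawC n A₂ A₁), P f → P g → P (f + g)
  mem_smul : ∀ {n : ℕ} (r : ℂ) (f : RawC n A₂ A₁), P f → P (r • f)
  mem_d : ∀ {n : ℕ} (f : RawC n A₂ A₁), P f → P (d f)
  mem_br : ∀ {m n : ℕ} (f : RawC m A₂ A₁) (g : RawC n A₂ A₁), P f → P g → P (br f g)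
  d_add : ∀ {n : ℕ} (f g : RawC n A₂ A₁), P f → P g → d (f + g) = d f + d g
  d_smul : ∀ {n : ℕ} (r : ℂ) (f : RawC n A₂ A₁), P f → d (r • f) = r • d f
  br_add_left : ∀ {m n : ℕ} (f f' : RawC m A₂ A₁) (g : RawC n A₂ A₁),
    P f → P f' → P g → br (f + f') g = br f g + br f' g
  br_smul_left : ∀ {m n : ℕ} (r : ℂ) (f : RawC m A₂ A₁) (g : RawC n A₂ A₁),
    P f → P g → br (r • f) g = r • br f g
  br_add_right : ∀ {m n : ℕ} (f : RawC m A₂ A₁) (g g' : RawC n A₂ A₁),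
    P f → P g → P g' → br f (g + g') = br f g + br f g'
  br_smul_right : ∀ {m n : ℕ} (r : ℂ) (f : RawC m A₂ A₁) (g : RawC n A₂ A₁),
    P f → P g → br f (r • g) = r • br f g
  d_squared : ∀ {n : ℕ} (f : RawC n A₂ A₁), P f → d (d f) = 0
  skew : ∀ {m n : ℕ} (f : RawC m A₂ A₁) (g : RawC n A₂ A₁), P f → P g →
    br f g = ((-1 : ℤ)) ^ ((m + 1) * (n + 1) + 1) •
      castRaw (show n + m + 1 = m + n + 1 by omega) (br g f)
  leibniz : ∀ {m n : ℕ} (f : RawC m A₂ A₁) (g : RawC n A₂ A₁), P f → P g →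
    castRaw (show m + n + 1 + 1 = m + n + 2 by omega) (d (br f g)) =
      castRaw (show m + 1 + n + 1 = m + n + 2 by omega) (br (d f) g) +
      ((-1 : ℤ)) ^ (m + 1) •
        castRaw (show m + (n + 1) + 1 = m + n + 2 by omega) (br f (d g))
  jacobi : ∀ {m n k : ℕ} (f : RawC m A₂ A₁) (g : RawC n A₂ A₁) (h : RawC k A₂ A₁),
    P f → P g → P h →
    castRaw (show m + (n + k + 1) + 1 = m + n + k + 2 by omega) (br f (br g h)) =
      castRaw (show m + n + 1 + k + 1 = m + n + k + 2 by omega) (br (br f g) h) +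
      ((-1 : ℤ)) ^ ((m + 1) * (n + 1)) •
        castRaw (show n + (m + k + 1) + 1 = m + n + k + 2 by omega) (br g (br f h))

/-- The subspace of `⊕ₙ RawC n A₂ A₁` cut out by `P` (placing `RawC n` in degree
`n+1`), with operations `l₁, l₂, l₃` (and `lᵢ = 0` for `i ≥ 4`), is an
`L∞`-algebra: graded skew-symmetry and the higher Jacobi identities
`∑_{i+j=n+1} (-1)^i ∑_{σ ∈ Sh(i,n-i)} χ(σ) l_j(l_i(x_{σ(1)},…),…) = 0`
(only `n = 1, …, 5` are nontrivial since `lᵢ = 0` for `i ≥ 4`). -/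
structure IsLInftyOn
    (P : ∀ {n : ℕ}, RawC n A₂ A₁ → Prop)
    (l1 : ∀ {n : ℕ}, RawC n A₂ A₁ → RawC (n + 1) A₂ A₁)
    (l2 : ∀ {m n : ℕ}, RawC m A₂ A₁ → RawC n A₂ A₁ → RawC (m + n + 1) A₂ A₁)
    (l3 : ∀ {m n k : ℕ}, RawC m A₂ A₁ → RawC n A₂ A₁ → RawC k A₂ A₁ →
      RawC (m + n + k + 1) A₂ A₁) : Prop where
  mem_zero : ∀ {n : ℕ}, P (0 : RawC n A₂ A₁)
  mem_add : ∀ {n : ℕ} (f g : RawC n A₂ A₁), P f → P g → P (f + g)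
  mem_smul : ∀ {n : ℕ} (r : ℂ) (f : RawC n A₂ A₁), P f → P (r • f)
  mem_l1 : ∀ {n : ℕ} (f : RawC n A₂ A₁), P f → P (l1 f)
  mem_l2 : ∀ {m n : ℕ} (f : RawC m A₂ A₁) (g : RawC n A₂ A₁), P f → P g → P (l2 f g)
  mem_l3 : ∀ {m n k : ℕ} (f : RawC m A₂ A₁) (g : RawC n A₂ A₁) (h : RawC k A₂ A₁),
    P f → P g → P h → P (l3 f g h)
  l1_add : ∀ {n : ℕ} (f g : RawC n A₂ A₁), P f → P g → l1 (f + g) = l1 f + l1 g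
  l1_smul : ∀ {n : ℕ} (r : ℂ) (f : RawC n A₂ A₁), P f → l1 (r • f) = r • l1 f
  l2_add_left : ∀ {m n : ℕ} (f f' : RawC m A₂ A₁) (g : RawC n A₂ A₁),
    P f → P f' → P g → l2 (f + f') g = l2 f g + l2 f' g
  l2_smul_left : ∀ {m n : ℕ} (r : ℂ) (f : RawC m A₂ A₁) (g : RawC n A₂ A₁),
    P f → P g → l2 (r • f) g = r • l2 f g
  l2_add_right : ∀ {m n : ℕ} (f : RawC m A₂ A₁) (g g' : RawC n A₂ A₁),
    P f → P g → P g' → l2 f (g + g') = l2 f g + l2 f g'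
  l2_smul_right : ∀ {m n : ℕ} (r : ℂ) (f : RawC m A₂ A₁) (g : RawC n A₂ A₁),
    P f → P g → l2 f (r • g) = r • l2 f g
  l3_add₁ : ∀ {m n k : ℕ} (f f' : RawC m A₂ A₁) (g : RawC n A₂ A₁) (h : RawC k A₂ A₁),
    P f → P f' → P g → P h → l3 (f + f') g h = l3 f g h + l3 f' g h
  l3_smul₁ : ∀ {m n k : ℕ} (r : ℂ) (f : RawC m A₂ A₁) (g : RawC n A₂ A₁)
    (h : RawC k A₂ A₁), P f → P g → P h → l3 (r • f) g h = r • l3 f g h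
  l3_add₂ : ∀ {m n k : ℕ} (f : RawC m A₂ A₁) (g g' : RawC n A₂ A₁) (h : RawC k A₂ A₁),
    P f → P g → P g' → P h → l3 f (g + g') h = l3 f g h + l3 f g' h
  l3_smul₂ : ∀ {m n k : ℕ} (r : ℂ) (f : RawC m A₂ A₁) (g : RawC n A₂ A₁)
    (h : RawC k A₂ A₁), P f → P g → P h → l3 f (r • g) h = r • l3 f g h
  l3_add₃ : ∀ {m n k : ℕ} (f : RawC m A₂ A₁) (g : RawC n A₂ A₁) (h h' : RawC k A₂ A₁),
    P f → P g → P h → P h' → l3 f g (h + h') = l3 f g h + l3 f g h'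
  l3_smul₃ : ∀ {m n k : ℕ} (r : ℂ) (f : RawC m A₂ A₁) (g : RawC n A₂ A₁)
    (h : RawC k A₂ A₁), P f → P g → P h → l3 f g (r • h) = r • l3 f g h
  skew2 : ∀ {m n : ℕ} (f : RawC m A₂ A₁) (g : RawC n A₂ A₁), P f → P g →
    l2 f g = ((-1 : ℤ)) ^ ((m + 1) * (n + 1) + 1) •
      castRaw (show n + m + 1 = m + n + 1 by omega) (l2 g f)
  skew3a : ∀ {m n k : ℕ} (f : RawC m A₂ A₁) (g : RawC n A₂ A₁) (h : RawC k A₂ A₁),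
    P f → P g → P h →
    l3 f g h = ((-1 : ℤ)) ^ ((m + 1) * (n + 1) + 1) •
      castRaw (show n + m + k + 1 = m + n + k + 1 by omega) (l3 g f h)
  skew3b : ∀ {m n k : ℕ} (f : RawC m A₂ A₁) (g : RawC n A₂ A₁) (h : RawC k A₂ A₁),
    P f → P g → P h →
    l3 f g h = ((-1 : ℤ)) ^ ((n + 1) * (k + 1) + 1) •
      castRaw (show m + k + n + 1 = m + n + k + 1 by omega) (l3 f h g)
  jac1 : ∀ {n : ℕ} (f : RawC n A₂ A₁), P f → l1 (l1 f) = 0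
  jac2 : ∀ {m n : ℕ} (f : RawC m A₂ A₁) (g : RawC n A₂ A₁), P f → P g →
    castRaw (show m + n + 1 + 1 = m + n + 2 by omega) (l1 (l2 f g))
      - castRaw (show m + 1 + n + 1 = m + n + 2 by omega) (l2 (l1 f) g)
      + ((-1 : ℤ)) ^ ((m + 1) * (n + 1)) •
          castRaw (show n + 1 + m + 1 = m + n + 2 by omega) (l2 (l1 g) f)
      = 0
  jac3 : ∀ {m n k : ℕ} (f : RawC m A₂ A₁) (g : RawC n A₂ A₁) (h : RawC k A₂ A₁),
    P f → P g → P h →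
    -(castRaw (show m + 1 + n + k + 1 = m + n + k + 2 by omega) (l3 (l1 f) g h))
      + ((-1 : ℤ)) ^ ((m + 1) * (n + 1)) •
          castRaw (show n + 1 + m + k + 1 = m + n + k + 2 by omega) (l3 (l1 g) f h)
      - ((-1 : ℤ)) ^ ((k + 1) * ((m + 1) + (n + 1))) •
          castRaw (show k + 1 + m + n + 1 = m + n + k + 2 by omega) (l3 (l1 h) f g)
      + castRaw (show m + n + 1 + k + 1 = m + n + k + 2 by omega) (l2 (l2 f g) h)
      - ((-1 : ℤ)) ^ ((n + 1) * (k + 1)) •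
          castRaw (show m + k + 1 + n + 1 = m + n + k + 2 by omega) (l2 (l2 f h) g)
      + ((-1 : ℤ)) ^ ((m + 1) * ((n + 1) + (k + 1))) •
          castRaw (show n + k + 1 + m + 1 = m + n + k + 2 by omega) (l2 (l2 g h) f)
      - castRaw (show m + n + k + 1 + 1 = m + n + k + 2 by omega) (l1 (l3 f g h))
      = 0
  jac4 : ∀ {m n k l : ℕ} (f : RawC m A₂ A₁) (g : RawC n A₂ A₁) (h : RawC k A₂ A₁)
    (e : RawC l A₂ A₁), P f → P g → P h → P e →
    castRaw (show m + n + 1 + k + l + 1 = m + n + k + l + 2 by omega) (l3 (l2 f g) h e)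
      - ((-1 : ℤ)) ^ ((n + 1) * (k + 1)) •
          castRaw (show m + k + 1 + n + l + 1 = m + n + k + l + 2 by omega)
            (l3 (l2 f h) g e)
      + ((-1 : ℤ)) ^ ((l + 1) * ((n + 1) + (k + 1))) •
          castRaw (show m + l + 1 + n + k + 1 = m + n + k + l + 2 by omega)
            (l3 (l2 f e) g h)
      + ((-1 : ℤ)) ^ ((m + 1) * ((n + 1) + (k + 1))) •
          castRaw (show n + k + 1 + m + l + 1 = m + n + k + l + 2 by omega)
            (l3 (l2 g h) f e)
      - ((-1 : ℤ)) ^ ((m + 1) * (n + 1) + (m + 1) * (l + 1) + (k + 1) * (l + 1)) •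
          castRaw (show n + l + 1 + m + k + 1 = m + n + k + l + 2 by omega)
            (l3 (l2 g e) f h)
      + ((-1 : ℤ)) ^ (((m + 1) + (n + 1)) * ((k + 1) + (l + 1))) •
          castRaw (show k + l + 1 + m + n + 1 = m + n + k + l + 2 by omega)
            (l3 (l2 h e) f g)
      - castRaw (show m + n + k + 1 + l + 1 = m + n + k + l + 2 by omega)
          (l2 (l3 f g h) e)
      + ((-1 : ℤ)) ^ ((k + 1) * (l + 1)) •
          castRaw (show m + n + l + 1 + k + 1 = m + n + k + l + 2 by omega)
            (l2 (l3 f g e) h)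
      - ((-1 : ℤ)) ^ ((n + 1) * ((k + 1) + (l + 1))) •
          castRaw (show m + k + l + 1 + n + 1 = m + n + k + l + 2 by omega)
            (l2 (l3 f h e) g)
      + ((-1 : ℤ)) ^ ((m + 1) * ((n + 1) + (k + 1) + (l + 1))) •
          castRaw (show n + k + l + 1 + m + 1 = m + n + k + l + 2 by omega)
            (l2 (l3 g h e) f)
      = 0
  jac5 : ∀ {a b c d e : ℕ} (x1 : RawC a A₂ A₁) (x2 : RawC b A₂ A₁) (x3 : RawC c A₂ A₁)
    (x4 : RawC d A₂ A₁) (x5 : RawC e A₂ A₁), P x1 → P x2 → P x3 → P x4 → P x5 →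
    castRaw (show a + b + c + 1 + d + e + 1 = a + b + c + d + e + 2 by omega)
        (l3 (l3 x1 x2 x3) x4 x5)
      - ((-1 : ℤ)) ^ ((c + 1) * (d + 1)) •
          castRaw (show a + b + d + 1 + c + e + 1 = a + b + c + d + e + 2 by omega)
            (l3 (l3 x1 x2 x4) x3 x5)
      + ((-1 : ℤ)) ^ ((e + 1) * ((c + 1) + (d + 1))) •
          castRaw (show a + b + e + 1 + c + d + 1 = a + b + c + d + e + 2 by omega)
            (l3 (l3 x1 x2 x5) x3 x4)
      + ((-1 : ℤ)) ^ ((b + 1) * ((c + 1) + (d + 1))) •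
          castRaw (show a + c + d + 1 + b + e + 1 = a + b + c + d + e + 2 by omega)
            (l3 (l3 x1 x3 x4) x2 x5)
      - ((-1 : ℤ)) ^ ((b + 1) * (c + 1) + (b + 1) * (e + 1) + (d + 1) * (e + 1)) •
          castRaw (show a + c + e + 1 + b + d + 1 = a + b + c + d + e + 2 by omega)
            (l3 (l3 x1 x3 x5) x2 x4)
      + ((-1 : ℤ)) ^ (((b + 1) + (c + 1)) * ((d + 1) + (e + 1))) •
          castRaw (show a + d + e + 1 + b + c + 1 = a + b + c + d + e + 2 by omega)
            (l3 (l3 x1 x4 x5) x2 x3)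
      - ((-1 : ℤ)) ^ ((a + 1) * ((b + 1) + (c + 1) + (d + 1))) •
          castRaw (show b + c + d + 1 + a + e + 1 = a + b + c + d + e + 2 by omega)
            (l3 (l3 x2 x3 x4) x1 x5)
      + ((-1 : ℤ)) ^ ((a + 1) * ((b + 1) + (c + 1) + (e + 1)) + (d + 1) * (e + 1)) •
          castRaw (show b + c + e + 1 + a + d + 1 = a + b + c + d + e + 2 by omega)
            (l3 (l3 x2 x3 x5) x1 x4)
      - ((-1 : ℤ)) ^ ((a + 1) * ((b + 1) + (d + 1) + (e + 1)) + (c + 1) * ((d + 1) + (e + 1))) •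
          castRaw (show b + d + e + 1 + a + c + 1 = a + b + c + d + e + 2 by omega)
            (l3 (l3 x2 x4 x5) x1 x3)
      + ((-1 : ℤ)) ^ (((a + 1) + (b + 1)) * ((c + 1) + (d + 1) + (e + 1))) •
          castRaw (show c + d + e + 1 + a + b + 1 = a + b + c + d + e + 2 by omega)
            (l3 (l3 x3 x4 x5) x1 x2)
      = 0

end GradedStructures

section TwistHom

variable {A₁ A₂ : Type*} [AddCommGroup A₁] [Module ℂ A₁] [AddCommGroup A₂] [Module ℂ A₂]

/-- `e^Ĥ = Id + Ĥ` as a linear endomorphism of `A₁ ⊕ A₂`. -/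
def eHp (H : A₂ →ₗ[ℂ] A₁) : (A₁ × A₂) →ₗ[ℂ] (A₁ × A₂) :=
  LinearMap.id + (LinearMap.inl ℂ A₁ A₂).comp (H.comp (LinearMap.snd ℂ A₁ A₂))

/-- `e^{-Ĥ} = Id - Ĥ` as a linear endomorphism of `A₁ ⊕ A₂`. -/
def eHm (H : A₂ →ₗ[ℂ] A₁) : (A₁ × A₂) →ₗ[ℂ] (A₁ × A₂) :=
  LinearMap.id - (LinearMap.inl ℂ A₁ A₂).comp (H.comp (LinearMap.snd ℂ A₁ A₂))

end TwistHom

end LCAF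

namespace LCAF

variable {A M N : Type*} [AddCommGroup A] [Module ℂ A] [AddCommGroup M] [Module ℂ M] [AddCommGroup N] [Module ℂ N]

def mapCoeffL {k : ℕ} (g : M →ₗ[ℂ] N) : MP k M →ₗ[ℂ] MP k N := Finsupp.mapRange.linearMap g

lemma mapCoeff_eq {k : ℕ} (g : M →ₗ[ℂ] N) (p : MP k M) : mapCoeff g p = mapCoeffL g p := rfl

lemma mapCoeffL_single {k : ℕ} (g : M →ₗ[ℂ] N) (α : Fin k →₀ ℕ) (m : M) :
    mapCoeffL g (Finsupp.single α m) = Finsupp.single α (g m) := by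
  simp [mapCoeffL]

def monMulL {k : ℕ} (α : Fin k →₀ ℕ) : MP k M →ₗ[ℂ] MP k M := Finsupp.lmapDomain M ℂ (fun β => α + β)

lemma monMul_eq {k : ℕ} (α : Fin k →₀ ℕ) (p : MP k M) : monMul α p = monMulL α p := rfl

lemma monMulL_single {k : ℕ} (α β : Fin k →₀ ℕ) (m : M) :
    monMulL α (Finsupp.single β m) = Finsupp.single (α + β) m := by
  simp [monMulL, Finsupp.lmapDomain_apply, Finsupp.mapDomain_single]

-- scaleP of Xv 0 is monMul lam1
lemma scaleP_Xv0 (p : MP 1 M) : scaleP (Xv 0) p = monMul lam1 p := by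
  unfold scaleP Xv
  rw [Finsupp.sum_single_index] <;> simp [lam1]

lemma scaleP_negXv0 (p : MP 1 M) : scaleP (-(Xv 0)) p = -(monMul lam1 p) := by
  unfold Xv
  rw [← Finsupp.single_neg]
  unfold scaleP
  rw [Finsupp.sum_single_index] <;> simp [lam1]

lemma opnd_id' (D : M →ₗ[ℂ] M) (p : MP 1 M) : opnd D (Xv 0) 0 p = monMul lam1 p := by
  simp [opnd, scaleP_Xv0]

/-- The operator `-(λ+∂)`. -/
def SopL (D : M →ₗ[ℂ] M) : MP 1 M →ₗ[ℂ] MP 1 M := -(monMulL lam1 + mapCoeffL D)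

lemma opnd_neg' (D : M →ₗ[ℂ] M) (p : MP 1 M) : opnd D (-(Xv 0)) (-1) p = SopL D p := by
  simp only [opnd, scaleP_negXv0, SopL, monMul_eq, mapCoeff_eq, LinearMap.neg_apply,
    LinearMap.add_apply, neg_one_smul]
  abel

lemma substFun_one (D : M →ₗ[ℂ] M) (q : Fin 1 → MP 1 ℂ) (c : Fin 1 → ℂ) (p : MP 1 M) :
    substFun D q c p = p.sum fun α m => (opnd D (q 0) (c 0))^[α 0] (Finsupp.single 0 m) := by
  unfold substFun
  congr 1
end LCAF

namespace LCAF
variable {A M N : Type*} [AddCommGroup A] [Module ℂ A] [AddCommGroup M] [Module ℂ M] [AddCommGroup N] [Module ℂ N]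

def sub1L (D : M →ₗ[ℂ] M) : MP 1 M →ₗ[ℂ] MP 1 M :=
  Finsupp.lsum ℂ fun α => (SopL D ^ (α 0)) ∘ₗ Finsupp.lsingle 0

lemma sub1_eq (D : M →ₗ[ℂ] M) (p : MP 1 M) : sub1 D p = sub1L D p := by
  unfold sub1
  rw [substFun_one, sub1L, Finsupp.lsum_apply]
  refine Finsupp.sum_congr fun α _ => ?_
  have hfun : opnd D (-(Xv 0)) (-1) = ⇑(SopL D) := funext (opnd_neg' D)
  simp [hfun, Module.End.pow_apply]

lemma sub1L_single (D : M →ₗ[ℂ] M) (α : Fin 1 →₀ ℕ) (m : M) :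
    sub1L D (Finsupp.single α m) = (SopL D ^ (α 0)) (Finsupp.single 0 m) := by
  simp [sub1L]

lemma SopL_comm (T : M →ₗ[ℂ] N) (DM : M →ₗ[ℂ] M) (DN : N →ₗ[ℂ] N)
    (hT : ∀ m, T (DM m) = DN (T m)) :
    (mapCoeffL (k := 1) T).comp (SopL DM) = (SopL DN).comp (mapCoeffL T) := by
  apply Finsupp.lhom_ext
  intro α m
  simp [SopL, monMulL_single, mapCoeffL_single, hT]

lemma SopL_pow_comm (T : M →ₗ[ℂ] N) (DM : M →ₗ[ℂ] M) (DN : N →ₗ[ℂ] N)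
    (hT : ∀ m, T (DM m) = DN (T m)) (n : ℕ) (p : MP 1 M) :
    mapCoeffL T ((SopL DM ^ n) p) = (SopL DN ^ n) (mapCoeffL T p) := by
  induction n generalizing p with
  | zero => simp
  | succ n ih =>
      rw [pow_succ, pow_succ]
      simp only [Module.End.mul_apply]
      have h1 := LinearMap.congr_fun (SopL_comm T DM DN hT) p
      simp only [LinearMap.comp_apply] at h1
      rw [ih, h1]

lemma mapCoeff_sub1 (T : M →ₗ[ℂ] N) (DM : M →ₗ[ℂ] M) (DN : N →ₗ[ℂ] N)
    (hT : ∀ m, T (DM m) = DN (T m)) (p : MP 1 M) :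
    mapCoeffL T (sub1L DM p) = sub1L DN (mapCoeffL T p) := by
  have : (mapCoeffL (k := 1) T).comp (sub1L DM) = (sub1L DN).comp (mapCoeffL T) := by
    apply Finsupp.lhom_ext
    intro α m
    simp only [LinearMap.comp_apply, Finsupp.lsingle_apply, sub1L_single, mapCoeffL_single]
    rw [SopL_pow_comm T DM DN hT, mapCoeffL_single]
  exact LinearMap.congr_fun this p

lemma sub1_Lam (D : M →ₗ[ℂ] M) (p : MP 1 M) :
    sub1L D (monMulL lam1 p) = SopL D (sub1L D p) := by
  have : (sub1L D).comp (monMulL lam1) = (SopL D).comp (sub1L D) := by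
    apply Finsupp.lhom_ext
    intro α m
    simp only [LinearMap.comp_apply, Finsupp.lsingle_apply, sub1L_single, monMulL_single]
    have h0 : (lam1 + α) 0 = α 0 + 1 := by
      simp [Finsupp.add_apply, lam1]; ring
    rw [h0, pow_succ']
    simp [Module.End.mul_apply]
  exact LinearMap.congr_fun this p

lemma sub1_Sop (D : M →ₗ[ℂ] M) (p : MP 1 M) :
    sub1L D (SopL D p) = monMulL lam1 (sub1L D p) := by
  have hpd : mapCoeffL D (sub1L D p) = sub1L D (mapCoeffL D p) :=
    mapCoeff_sub1 D D D (fun _ => rfl) p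
  simp only [SopL, LinearMap.neg_apply, LinearMap.add_apply, map_neg, map_add]
  rw [sub1_Lam, ← hpd]
  simp only [SopL, LinearMap.neg_apply, LinearMap.add_apply]
  abel

lemma sub1_sub1 (D : M →ₗ[ℂ] M) (p : MP 1 M) : sub1L D (sub1L D p) = p := by
  have key : ∀ (n : ℕ) (m : M), sub1L D ((SopL D ^ n) (Finsupp.single 0 m)) =
      (monMulL lam1 ^ n) (Finsupp.single (0 : Fin 1 →₀ ℕ) m) := by
    intro n m
    induction n with
    | zero => simp [sub1L_single]
    | succ n ih =>
        rw [pow_succ', pow_succ']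
        simp only [Module.End.mul_apply]
        rw [sub1_Sop, ih]
  have lam_pow : ∀ (n : ℕ) (m : M), (monMulL lam1 ^ n) (Finsupp.single (0 : Fin 1 →₀ ℕ) m) =
      Finsupp.single (n • lam1) m := by
    intro n m
    induction n with
    | zero => simp
    | succ n ih =>
        rw [pow_succ', Module.End.mul_apply, ih, monMulL_single, succ_nsmul]
        congr 1
        abel
  have fin1 : ∀ α : Fin 1 →₀ ℕ, (α 0) • lam1 = α := by
    intro α
    apply Finsupp.ext
    intro i
    have : i = 0 := Subsingleton.elim _ _
    subst this
    simp [lam1, Finsupp.smul_apply]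
  have : (sub1L (M := M) D).comp (sub1L D) = LinearMap.id := by
    apply Finsupp.lhom_ext
    intro α m
    simp only [LinearMap.comp_apply, Finsupp.lsingle_apply, sub1L_single, LinearMap.id_apply]
    rw [key, lam_pow, fin1]
  exact LinearMap.congr_fun this p
end LCAF

namespace LCAF
variable {A M N X : Type*} [AddCommGroup A] [Module ℂ A] [AddCommGroup M] [Module ℂ M]
  [AddCommGroup N] [Module ℂ N] [AddCommGroup X] [Module ℂ X]

lemma monMulL_pow_single (n : ℕ) (m : M) :
    ((monMulL lam1) ^ n) (Finsupp.single (0 : Fin 1 →₀ ℕ) m) = Finsupp.single (n • lam1) m := by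
  induction n with
  | zero => simp
  | succ n ih =>
      rw [pow_succ', Module.End.mul_apply, ih, monMulL_single, succ_nsmul]
      congr 1
      abel

lemma fin1_smul_lam1 (α : Fin 1 →₀ ℕ) : (α 0) • lam1 = α := by
  apply Finsupp.ext
  intro i
  have : i = 0 := Subsingleton.elim _ _
  subst this
  simp [lam1, Finsupp.smul_apply]

lemma substFun_id1 (D : M →ₗ[ℂ] M) (p : MP 1 M) :
    substFun D (fun _ => Xv 0) (fun _ => 0) p = p := by
  rw [substFun_one]
  have : ∀ α : Fin 1 →₀ ℕ, ∀ m : M, (opnd D (Xv 0) 0)^[α 0] (Finsupp.single 0 m)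
      = Finsupp.single α m := by
    intro α m
    have hfun : opnd D (Xv 0) 0 = ⇑(monMulL (M := M) lam1) := by
      funext p; rw [opnd_id', monMul_eq]
    rw [hfun, ← Module.End.pow_apply, monMulL_pow_single, fin1_smul_lam1]
  rw [Finsupp.sum_congr (fun α _ => this α (p α))]
  exact Finsupp.sum_single p

lemma sum_single_map (H : M →ₗ[ℂ] N) (p : MP 1 M) :
    (p.sum fun β x => Finsupp.single β (H x)) = mapCoeffL H p := by
  induction p using Finsupp.induction_linear with
  | zero => simp
  | add f g hf hg =>
      rw [Finsupp.sum_add_index' (by simp) (by intro a b₁ b₂; rw [map_add, Finsupp.single_add]),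
        hf, hg, map_add]
  | single a b =>
      rw [Finsupp.sum_single_index (by simp), mapCoeffL_single]

lemma pairP_eq (p : MP 1 A) (q : MP 1 M) :
    pairP p q = mapCoeffL (LinearMap.inl ℂ A M) p + mapCoeffL (LinearMap.inr ℂ A M) q := by
  apply Finsupp.ext
  intro γ
  simp [pairP, mapCoeffL, Finsupp.mapRange_apply, Finsupp.add_apply]

lemma mapCoeffL_comp {P : Type*} [AddCommGroup P] [Module ℂ P]
    (g : N →ₗ[ℂ] P) (f : M →ₗ[ℂ] N) (p : MP 1 M) :
    mapCoeffL g (mapCoeffL f p) = mapCoeffL (g ∘ₗ f) p := by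
  apply Finsupp.ext
  intro γ
  simp [mapCoeffL, Finsupp.mapRange_apply]

lemma mapCoeffL_zero_map (p : MP 1 M) : mapCoeffL (0 : M →ₗ[ℂ] N) p = 0 := by
  apply Finsupp.ext
  intro γ
  simp [mapCoeffL, Finsupp.mapRange_apply]

lemma fst_pairP (p : MP 1 A) (q : MP 1 M) :
    Finsupp.mapRange (Prod.fst : A × M → A) rfl (pairP p q) = p := by
  apply Finsupp.ext
  intro γ
  simp [pairP, Finsupp.mapRange_apply, Finsupp.add_apply]

lemma sub1_pairP (D : A →ₗ[ℂ] A) (DM : M →ₗ[ℂ] M) (p : MP 1 A) (q : MP 1 M) :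
    sub1L (D.prodMap DM) (pairP p q) = pairP (sub1L D p) (sub1L DM q) := by
  rw [pairP_eq, map_add, pairP_eq]
  congr 1
  · exact (mapCoeff_sub1 (LinearMap.inl ℂ A M) D (D.prodMap DM) (by intro a; simp) p).symm
  · exact (mapCoeff_sub1 (LinearMap.inr ℂ A M) DM (D.prodMap DM) (by intro m; simp) q).symm
end LCAF

namespace LCAF
variable {X : Type*} [AddCommGroup X] [Module ℂ X]

lemma perm2_univ : (Finset.univ : Finset (Equiv.Perm (Fin 2))) = {1, Equiv.swap 0 1} := by
  decide

lemma unsh1 (σ : Equiv.Perm (Fin 2)) : IsUnsh 1 σ := by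
  intro i j hij h
  have h1 := Fin.lt_def.mp hij
  have := i.isLt; have := j.isLt
  omega

lemma unsh2 (σ : Equiv.Perm (Fin 2)) : IsUnsh 2 σ ↔ σ = 1 := by
  constructor
  · intro h
    have h01 : σ 0 < σ 1 := h 0 1 (by decide) (Or.inl (by decide))
    have e0 : σ 0 = 0 := by omega
    have e1 : σ 1 = 1 := by omega
    ext i
    fin_cases i <;> simp [e0, e1]
  · rintro rfl
    intro i j hij h
    simpa using hij

lemma monMul_zero' {k : ℕ} (p : MP k X) : monMul (0 : Fin k →₀ ℕ) p = p := by
  unfold monMul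
  simp only [zero_add]
  exact Finsupp.mapDomain_id

lemma renameV_id1 (rn : Fin 1 → Fin 1) (p : MP 1 X) : renameV rn p = p := by
  have : rn = id := funext fun j => Subsingleton.elim _ _
  subst this
  unfold renameV
  simp only [Finsupp.mapDomain_id, id_eq]
  exact Finsupp.mapDomain_id

lemma fin1_fun {Y : Type*} (f : Fin 1 → Y) : f = fun _ => f 0 := by
  funext j
  have : j = 0 := Subsingleton.elim _ _
  rw [this]

lemma exprQ_zero : exprQ (0 : Fin 2) = Xv 0 := by
  rw [exprQ, dif_neg (by decide)]
  rfl

lemma exprQ_one : exprQ (1 : Fin 2) = -(Xv 0) := by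
  rw [exprQ, dif_pos (by decide : (1 : Fin 2) = Fin.last 1), Fin.sum_univ_one]

lemma exprC_zero : exprC (0 : Fin 2) = 0 := by
  rw [exprC, if_neg (by decide)]

lemma exprC_one : exprC (1 : Fin 2) = -1 := by
  rw [exprC, if_pos (by decide : (1 : Fin 2) = Fin.last 1)]

lemma diamond10 (DX : X →ₗ[ℂ] X) (H : X →ₗ[ℂ] X) (F : RawC 1 X X) (G : RawC 0 X X)
    (hG : ∀ v : Fin 1 → X, G v = Finsupp.single 0 (H (v 0)))
    (hF0 : ∀ g : Fin 1 → X, F (Fin.cons 0 g) = 0) (a : Fin 2 → X) :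
    diamond DX F G a =
      F (Fin.cons (H (a 0)) (fun _ => a 1))
        - sub1 DX (F (Fin.cons (H (a 1)) (fun _ => a 0))) := by
  unfold diamond
  have hfil : (Finset.univ.filter fun σ : Equiv.Perm (Fin 2) => IsUnsh (0 + 1) σ)
      = {1, Equiv.swap 0 1} := by
    rw [Finset.filter_true_of_mem (fun σ _ => unsh1 σ), perm2_univ]
  rw [hfil]
  have key : ∀ σ : Equiv.Perm (Fin 2),
      substFun DX
        (fun v : Fin 1 =>
          if v.val = 0 then ∑ i : Fin 1, exprQ (σ (Fin.castLE (by omega) i))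
          else exprQ (σ v.castSucc))
        (fun v : Fin 1 =>
          if v.val = 0 then ∑ i : Fin 1, exprC (σ (Fin.castLE (by omega) i))
          else exprC (σ v.castSucc))
        ((G fun i : Fin 1 => a (σ (Fin.castLE (by omega) i))).sum fun β x =>
          monMul
            (Finsupp.mapDomain
              (fun i : Fin 0 => (Fin.cast (by omega) (Fin.castAdd 1 i) : Fin 1)) β)
            (renameV (fun j : Fin 1 => (Fin.cast (by omega) (Fin.natAdd 0 j) : Fin 1))
              (F (Fin.cons x fun j : Fin 1 =>
                a (σ (Fin.cast (by omega) (Fin.natAdd 1 j)))))))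
      = substFun DX (fun _ => exprQ (σ 0)) (fun _ => exprC (σ 0))
          (F (Fin.cons (H (a (σ 0))) (fun _ => a (σ 1)))) := by
    intro σ
    rw [hG]
    rw [Finsupp.sum_single_index]
    · have hc : Fin.castLE (show 0 + 1 ≤ 1 + 0 + 1 by omega) (0 : Fin 1) = (0 : Fin 2) := rfl
      have harg : (fun j : Fin 1 => a (σ (Fin.cast (by omega) (Fin.natAdd 1 j))))
          = fun _ : Fin 1 => a (σ 1) := by
        funext j
        have : j = 0 := Subsingleton.elim _ _
        subst this
        rfl
      have hq : (fun v : Fin 1 =>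
          if v.val = 0 then ∑ i : Fin 1, exprQ (σ (Fin.castLE (by omega) i))
          else exprQ (σ v.castSucc)) = fun _ : Fin 1 => exprQ (σ 0) := by
        funext v
        have hv : v.val = 0 := by omega
        rw [if_pos hv, Fin.sum_univ_one]
        rfl
      have hcq : (fun v : Fin 1 =>
          if v.val = 0 then ∑ i : Fin 1, exprC (σ (Fin.castLE (by omega) i))
          else exprC (σ v.castSucc)) = fun _ : Fin 1 => exprC (σ 0) := by
        funext v
        have hv : v.val = 0 := by omega
        rw [if_pos hv, Fin.sum_univ_one]
        rfl
      rw [hq, hcq, harg]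
      congr 1
      rw [Finsupp.mapDomain_zero, monMul_zero', renameV_id1]
      rfl
    · rw [hF0]
      simp [renameV, monMul, Finsupp.mapDomain_zero]
  rw [Finset.sum_insert (by decide), Finset.sum_singleton, key, key]
  simp only [Equiv.Perm.one_apply, Equiv.swap_apply_left, Equiv.swap_apply_right,
    Equiv.Perm.sign_one, Equiv.Perm.sign_swap (by decide : (0 : Fin 2) ≠ 1)]
  rw [exprQ_zero, exprC_zero, exprQ_one, exprC_one, substFun_id1]
  have : (((1 : ℤˣ) : ℤ)) = 1 := rfl
  rw [this, one_smul]
  have h2 : (((-1 : ℤˣ) : ℤ)) = -1 := rfl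
  rw [h2]
  have hsub : substFun DX (fun _ : Fin 1 => -(Xv 0)) (fun _ : Fin 1 => (-1 : ℂ))
      (F (Fin.cons (H (a 1)) fun _ => a 0))
      = sub1 DX (F (Fin.cons (H (a 1)) fun _ => a 0)) := rfl
  rw [hsub, neg_one_zsmul, sub_eq_add_neg]

end LCAF

namespace LCAF
variable {X : Type*} [AddCommGroup X] [Module ℂ X]

lemma diamond01 (DX : X →ₗ[ℂ] X) (H : X →ₗ[ℂ] X) (F : RawC 1 X X) (G : RawC 0 X X)
    (hG : ∀ v : Fin 1 → X, G v = Finsupp.single 0 (H (v 0))) (a : Fin 2 → X) :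
    diamond DX G F a = mapCoeffL H (F a) := by
  unfold diamond
  have hfil : (Finset.univ.filter fun σ : Equiv.Perm (Fin 2) => IsUnsh (1 + 1) σ)
      = {1} := by
    apply Finset.ext
    intro σ
    simp only [Finset.mem_filter, Finset.mem_univ, true_and, Finset.mem_singleton]
    exact unsh2 σ
  rw [hfil, Finset.sum_singleton]
  have harg : (fun i : Fin 2 => a ((1 : Equiv.Perm (Fin 2)) (Fin.castLE (by omega) i))) = a := by
    funext i
    rfl
  rw [harg]
  have hsum : ((F a).sum fun β x =>
      monMul (Finsupp.mapDomain
          (fun i : Fin 1 => (Fin.cast (by omega) (Fin.castAdd 0 i) : Fin 1)) β)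
        (renameV (fun j : Fin 0 => (Fin.cast (by omega) (Fin.natAdd 1 j) : Fin 1))
          (G (Fin.cons x fun j : Fin 0 =>
            a ((1 : Equiv.Perm (Fin 2)) (Fin.cast (by omega) (Fin.natAdd (1 + 1) j)))))))
      = mapCoeffL H (F a) := by
    rw [← sum_single_map H (F a)]
    refine Finsupp.sum_congr fun β _ => ?_
    rw [hG]
    have h0 : (Fin.cons ((F a) β) (fun j : Fin 0 =>
        a ((1 : Equiv.Perm (Fin 2)) (Fin.cast (by omega) (Fin.natAdd (1 + 1) j)))) : Fin 1 → X) 0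
        = (F a) β := rfl
    rw [h0]
    have hmi : Finsupp.mapDomain
        (fun i : Fin 1 => (Fin.cast (by omega) (Fin.castAdd 0 i) : Fin 1)) β = β := by
      have : (fun i : Fin 1 => (Fin.cast (by omega) (Fin.castAdd 0 i) : Fin 1)) = id :=
        funext fun j => Subsingleton.elim _ _
      rw [this, Finsupp.mapDomain_id]
    rw [hmi]
    unfold renameV monMul
    rw [Finsupp.mapDomain_single, Finsupp.mapDomain_single, Finsupp.mapDomain_zero, add_zero]
  rw [hsum]
  have hq : (fun v : Fin 1 =>
      if v.val = 1 then ∑ i : Fin 2, exprQ ((1 : Equiv.Perm (Fin 2)) (Fin.castLE (by omega) i))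
      else exprQ ((1 : Equiv.Perm (Fin 2)) v.castSucc)) = fun _ : Fin 1 => Xv 0 := by
    funext v
    rw [if_neg (by omega), ← exprQ_zero]
    have : v = 0 := Subsingleton.elim _ _
    subst this
    rfl
  have hcq : (fun v : Fin 1 =>
      if v.val = 1 then ∑ i : Fin 2, exprC ((1 : Equiv.Perm (Fin 2)) (Fin.castLE (by omega) i))
      else exprC ((1 : Equiv.Perm (Fin 2)) v.castSucc)) = fun _ : Fin 1 => (0 : ℂ) := by
    funext v
    rw [if_neg (by omega), ← exprC_zero]
    have : v = 0 := Subsingleton.elim _ _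
    subst this
    rfl
  rw [hq, hcq, substFun_id1]
  simp

end LCAF

namespace LCAF
variable {A M X : Type*} [AddCommGroup A] [Module ℂ A] [AddCommGroup M] [Module ℂ M]
  [AddCommGroup X] [Module ℂ X]

lemma castRaw_self {Y Z : Type*} [AddCommGroup Z] {m : ℕ} (h : m = m) (f : RawC m Y Z) :
    castRaw h f = f := rfl

lemma nr_hat (DX : X →ₗ[ℂ] X) (H : X →ₗ[ℂ] X) (F : RawC 1 X X) (G : RawC 0 X X)
    (hG : ∀ v : Fin 1 → X, G v = Finsupp.single 0 (H (v 0)))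
    (hF0 : ∀ g : Fin 1 → X, F (Fin.cons 0 g) = 0) (a : Fin 2 → X) :
    nr DX F G a =
      F (Fin.cons (H (a 0)) (fun _ => a 1))
        - sub1L DX (F (Fin.cons (H (a 1)) (fun _ => a 0)))
        - mapCoeffL H (F a) := by
  unfold nr
  have h1 : (1 : ℕ) * 0 = 0 := rfl
  rw [h1, pow_zero, castRaw_self (f := diamond DX G F), one_smul]
  have : (diamond DX F G - diamond DX G F) a = diamond DX F G a - diamond DX G F a := rfl
  rw [this, diamond10 DX H F G hG hF0 a, diamond01 DX H F G hG a, sub1_eq]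

lemma mapCoeffL_id (p : MP 1 M) : mapCoeffL (LinearMap.id : M →ₗ[ℂ] M) p = p := by
  apply Finsupp.ext
  intro γ
  simp [mapCoeffL, Finsupp.mapRange_apply]

lemma pairP_sub (p p' : MP 1 A) (q q' : MP 1 M) :
    pairP p q - pairP p' q' = pairP (p - p') (q - q') := by
  simp only [pairP_eq, map_sub]
  abel

lemma pairP_zero : pairP (0 : MP 1 A) (0 : MP 1 M) = 0 := by
  simp [pairP_eq]

lemma fstL_pairP (p : MP 1 A) (q : MP 1 M) :
    mapCoeffL (LinearMap.fst ℂ A M) (pairP p q) = p := by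
  rw [pairP_eq, map_add, mapCoeffL_comp, mapCoeffL_comp]
  have h1 : (LinearMap.fst ℂ A M) ∘ₗ (LinearMap.inl ℂ A M) = LinearMap.id := by
    apply LinearMap.ext; intro x; rfl
  have h2 : (LinearMap.fst ℂ A M) ∘ₗ (LinearMap.inr ℂ A M) = 0 := by
    apply LinearMap.ext; intro x; rfl
  rw [h1, h2, mapCoeffL_id, mapCoeffL_zero_map, add_zero]

lemma fstP_eq (p : MP 1 (A × M)) :
    Finsupp.mapRange (Prod.fst : A × M → A) rfl p = mapCoeffL (LinearMap.fst ℂ A M) p := by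
  apply Finsupp.ext
  intro γ
  simp [mapCoeffL, Finsupp.mapRange_apply]

lemma mapH_pairP (T : M →ₗ[ℂ] A) (p : MP 1 A) (q : MP 1 M) :
    mapCoeffL ((LinearMap.inl ℂ A M) ∘ₗ T ∘ₗ (LinearMap.snd ℂ A M)) (pairP p q)
      = pairP (mapCoeffL T q) 0 := by
  rw [pairP_eq, map_add, mapCoeffL_comp, mapCoeffL_comp]
  have h1 : ((LinearMap.inl ℂ A M) ∘ₗ T ∘ₗ (LinearMap.snd ℂ A M)) ∘ₗ (LinearMap.inl ℂ A M)
      = 0 := by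
    apply LinearMap.ext; intro x; simp
  have h2 : ((LinearMap.inl ℂ A M) ∘ₗ T ∘ₗ (LinearMap.snd ℂ A M)) ∘ₗ (LinearMap.inr ℂ A M)
      = (LinearMap.inl ℂ A M) ∘ₗ T := by
    apply LinearMap.ext; intro x; rfl
  rw [h1, h2, mapCoeffL_zero_map, zero_add, pairP_eq, map_zero, add_zero, ← mapCoeffL_comp]

end LCAF

namespace LCAF

lemma pairP_neg {A M : Type*} [AddCommGroup A] [Module ℂ A] [AddCommGroup M] [Module ℂ M]
    (p : MP 1 A) (q : MP 1 M) : -pairP p q = pairP (-p) (-q) := by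
  simp only [pairP_eq, map_neg]
  abel

theorem statement10' {A M : Type*} [AddCommGroup A] [Module ℂ A]
    [AddCommGroup M] [Module ℂ M]
    (D : A →ₗ[ℂ] A) (br : A → A → MP 1 A) (hL : IsLCA D br)
    (DM : M →ₗ[ℂ] M) (rho : A → M → MP 1 M) (hM : IsLCAMod D br DM rho)
    (T : M →ₗ[ℂ] A) (hT : ∀ m : M, T (DM m) = D (T m)) :
    IsRB br DM rho T ↔
      ell2 (D.prodMap DM) (toC2 (sdBr br DM rho (fun _ _ => 0)))
        (hatC1 T) (hatC1 T) = 0 := by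
  set X := A × M with hX
  set DX := D.prodMap DM with hDX
  set Hh : X →ₗ[ℂ] X := (LinearMap.inl ℂ A M) ∘ₗ T ∘ₗ (LinearMap.snd ℂ A M) with hHh
  set mu : RawC 1 X X := toC2 (sdBr br DM rho (fun _ _ => 0)) with hmu
  -- basic zero lemmas
  have br0r : ∀ a, br a 0 = 0 := by
    intro a
    have h := hL.smul_right 0 a 0
    simpa using h
  have br0l : ∀ a, br 0 a = 0 := by
    intro a
    have h := hL.smul_left 0 0 a
    simpa using h
  have rho0l : ∀ m, rho 0 m = 0 := by
    intro m
    have h := hM.smul_left 0 0 m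
    simpa using h
  have rho0r : ∀ a, rho a 0 = 0 := by
    intro a
    have h := hM.smul_right 0 a 0
    simpa using h
  -- Ghat
  have hGhat : ∀ v : Fin 1 → X, liftC (hatC1 T) v = Finsupp.single 0 (Hh (v 0)) := by
    intro v
    simp only [liftC, hatC1, Finsupp.mapRange_single]
    rfl
  -- mu on cons pairs
  have muP : ∀ x y : X, mu (Fin.cons x (fun _ => y))
      = pairP (br x.1 y.1) (rho x.1 y.2 - sub1L DM (rho y.1 x.2)) := by
    intro x y
    show sdBr br DM rho (fun _ _ => 0) ((Fin.cons x (fun _ => y) : Fin 2 → X) 0)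
      ((Fin.cons x (fun _ => y) : Fin 2 → X) 1) = _
    have h0 : (Fin.cons x (fun _ => y) : Fin 2 → X) 0 = x := rfl
    have h1 : (Fin.cons x (fun _ => y) : Fin 2 → X) 1 = y := rfl
    rw [h0, h1]
    unfold sdBr
    rw [add_zero, sub1_eq]
  have hmu0 : ∀ g : Fin 1 → X, mu (Fin.cons 0 g) = 0 := by
    intro g
    have : (Fin.cons 0 g : Fin 2 → X) = Fin.cons 0 (fun _ => g 0) := by
      funext i
      fin_cases i <;> rfl
    rw [this, muP]
    show pairP (br 0 (g 0).1) (rho 0 (g 0).2 - sub1L DM (rho (g 0).1 0)) = 0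
    rw [br0l, rho0l, rho0r, map_zero, sub_zero, pairP_zero]
  -- nu
  set nu : RawC 1 X X := nr DX mu (liftC (hatC1 T)) with hnudef
  have hnu : ∀ a : Fin 2 → X, nu a
      = mu (Fin.cons (Hh (a 0)) (fun _ => a 1))
        - sub1L DX (mu (Fin.cons (Hh (a 1)) (fun _ => a 0)))
        - mapCoeffL Hh (mu a) :=
    fun a => nr_hat DX Hh mu (liftC (hatC1 T)) hGhat hmu0 a
  have hnu0 : ∀ g : Fin 1 → X, nu (Fin.cons 0 g) = 0 := by
    intro g
    rw [hnu]
    have e0 : (Fin.cons (0:X) g : Fin 2 → X) 0 = 0 := rfl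
    have e1 : (Fin.cons (0:X) g : Fin 2 → X) 1 = g 0 := rfl
    rw [e0, e1, map_zero, hmu0, hmu0]
    have : mu (Fin.cons (Hh (g 0)) (fun _ => (0:X))) = 0 := by
      rw [muP]
      show pairP (br (Hh (g 0)).1 (0:A)) (rho (Hh (g 0)).1 (0:M) - sub1L DM (rho (0:A) (Hh (g 0)).2)) = 0
      rw [br0r, rho0r, rho0l, map_zero, sub_zero, pairP_zero]
    rw [this]
    simp
  -- nu on the three patterns
  have Hh0m : ∀ m : M, Hh ((0 : A), m) = ((T m, 0) : X) := fun m => rfl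
  have HhT : ∀ m : M, Hh ((T m, 0) : X) = 0 := by
    intro m
    show ((T 0, 0) : X) = 0
    rw [map_zero]
    rfl
  have nu1 : ∀ m n : M, nu (Fin.cons ((T m, 0) : X) (fun _ => ((0 : A), n)))
      = pairP (-(sub1L D (br (T n) (T m))) - mapCoeffL T (rho (T m) n)) 0 := by
    intro m n
    rw [hnu]
    have e0 : (Fin.cons ((T m, 0) : X) (fun _ => ((0:A), n)) : Fin 2 → X) 0 = (T m, 0) := rfl
    have e1 : (Fin.cons ((T m, 0) : X) (fun _ => ((0:A), n)) : Fin 2 → X) 1 = ((0:A), n) := rfl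
    rw [e0, e1, HhT m, hmu0 (fun _ => ((0:A), n)), Hh0m n]
    have c2 : mu (Fin.cons ((T n, 0) : X) (fun _ => ((T m, 0) : X)))
        = pairP (br (T n) (T m)) 0 := by
      rw [muP]
      show pairP (br (T n) (T m)) (rho (T n) 0 - sub1L DM (rho (T m) 0)) = _
      rw [rho0r, rho0r, map_zero, sub_zero]
    have c3 : mu (Fin.cons ((T m, 0) : X) (fun _ => ((0 : A), n)))
        = pairP 0 (rho (T m) n) := by
      rw [muP]
      show pairP (br (T m) 0) (rho (T m) n - sub1L DM (rho 0 0)) = _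
      rw [br0r, rho0l, map_zero, sub_zero]
    rw [c2, c3, sub1_pairP, mapH_pairP, map_zero, zero_sub, pairP_neg, pairP_sub]
    congr 1
    simp
  have nu3 : ∀ m n : M, nu (Fin.cons (((0 : A), m) : X) (fun _ => ((0 : A), n)))
      = pairP 0 (rho (T m) n - sub1L DM (rho (T n) m)) := by
    intro m n
    rw [hnu]
    have e0 : (Fin.cons (((0:A), m) : X) (fun _ => ((0:A), n)) : Fin 2 → X) 0 = (0, m) := rfl
    have e1 : (Fin.cons (((0:A), m) : X) (fun _ => ((0:A), n)) : Fin 2 → X) 1 = ((0:A), n) := rfl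
    rw [e0, e1, Hh0m m, Hh0m n]
    have c1 : mu (Fin.cons ((T m, 0) : X) (fun _ => ((0 : A), n)))
        = pairP 0 (rho (T m) n) := by
      rw [muP]
      show pairP (br (T m) 0) (rho (T m) n - sub1L DM (rho 0 0)) = _
      rw [br0r, rho0l, map_zero, sub_zero]
    have c2 : mu (Fin.cons ((T n, 0) : X) (fun _ => ((0 : A), m)))
        = pairP 0 (rho (T n) m) := by
      rw [muP]
      show pairP (br (T n) 0) (rho (T n) m - sub1L DM (rho 0 0)) = _
      rw [br0r, rho0l, map_zero, sub_zero]
    have c3 : mu (Fin.cons (((0:A), m) : X) (fun _ => ((0 : A), n))) = 0 := by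
      rw [muP]
      show pairP (br 0 0) (rho 0 n - sub1L DM (rho 0 m)) = 0
      rw [br0l, rho0l, rho0l, map_zero, sub_zero, pairP_zero]
    rw [c1, c2, c3, map_zero, sub_zero, sub1_pairP, map_zero, pairP_sub, sub_zero]
  -- the value of ell2
  have hval : ∀ v : Fin 2 → M,
      ell2 DX mu (hatC1 T) (hatC1 T) v
        = (2 : ℂ) • (br (T (v 0)) (T (v 1))
            - mapCoeffL T (rho (T (v 0)) (v 1) - sub1L DM (rho (T (v 1)) (v 0)))) := by
    intro v
    have h1 : ell2 DX mu (hatC1 T) (hatC1 T) v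
        = Finsupp.mapRange (Prod.fst : X → A) rfl
            ((nr DX nu (liftC (hatC1 T))) (fun i => ((0 : A), v i))) := by
      show ((-1 : ℤ)) ^ 0 • downC (castRaw rfl (nr DX nu (liftC (hatC1 T)))) v = _
      rw [pow_zero, one_smul, castRaw_self]
      rfl
    have ha : (fun i : Fin 2 => ((0 : A), v i)) = Fin.cons ((0:A), v 0) (fun _ => ((0:A), v 1)) := by
      funext i
      fin_cases i <;> rfl
    rw [h1, ha, nr_hat DX Hh nu (liftC (hatC1 T)) hGhat hnu0]
    have f0 : (Fin.cons ((0:A), v 0) (fun _ => ((0:A), v 1)) : Fin 2 → X) 0 = ((0:A), v 0) := rfl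
    have f1 : (Fin.cons ((0:A), v 0) (fun _ => ((0:A), v 1)) : Fin 2 → X) 1 = ((0:A), v 1) := rfl
    rw [f0, f1, Hh0m, Hh0m, nu1, nu1, nu3]
    rw [sub1_pairP, mapH_pairP, fstP_eq, map_sub, map_sub, fstL_pairP, fstL_pairP, fstL_pairP]
    have hskew : -(sub1L D (br (T (v 1)) (T (v 0)))) = br (T (v 0)) (T (v 1))  := by
      rw [← sub1_eq, ← hL.skew]
    have hinv : sub1L D (-(sub1L D (br (T (v 0)) (T (v 1))))) = -(br (T (v 0)) (T (v 1))) := by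
      rw [map_neg, sub1_sub1]
    have hcomm : sub1L D (mapCoeffL T (rho (T (v 1)) (v 0)))
        = mapCoeffL T (sub1L DM (rho (T (v 1)) (v 0))) :=
      (mapCoeff_sub1 T DM D hT _).symm
    rw [map_sub, hinv, hcomm, hskew, map_sub]
    rw [two_smul]
    abel
  constructor
  · intro hRB
    funext v
    rw [hval v]
    have h := hRB (v 0) (v 1)
    rw [mapCoeff_eq, sub1_eq] at h
    rw [h, sub_self, smul_zero]
    rfl
  · intro h m n
    have h2 := congrFun h (Fin.cons m (fun _ => n) : Fin 2 → M)
    rw [hval (Fin.cons m (fun _ => n))] at h2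
    have e0 : (Fin.cons m (fun _ => n) : Fin 2 → M) 0 = m := rfl
    have e1 : (Fin.cons m (fun _ => n) : Fin 2 → M) 1 = n := rfl
    rw [e0, e1] at h2
    have h3 : br (T m) (T n) - mapCoeffL T (rho (T m) n - sub1L DM (rho (T n) m)) = 0 := by
      have h4 : (0 : RawC 1 M A) (Fin.cons m (fun _ => n)) = 0 := rfl
      rw [h4] at h2
      rcases smul_eq_zero.mp h2 with h5 | h5
      · exact absurd h5 two_ne_zero
      · exact h5
    rw [mapCoeff_eq, sub1_eq]
    exact sub_eq_zero.mp h3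

end LCAF
namespace LCAF

/-- `T : M → A` is a relative Rota–Baxter operator iff its lift
`T̂` satisfies the Maurer–Cartan equation `[T̂,T̂]_{μ̂} = 0` in the graded Lie
algebra `(C^*(M,A), [·,·]_{μ̂})` of the semidirect product `A ⋉_ρ M`. -/
theorem statement10 {A M : Type*} [AddCommGroup A] [Module ℂ A]
    [AddCommGroup M] [Module ℂ M]
    (D : A →ₗ[ℂ] A) (br : A → A → MP 1 A) (hL : IsLCA D br)
    (DM : M →ₗ[ℂ] M) (rho : A → M → MP 1 M) (hM : IsLCAMod D br DM rho)
    (T : M →ₗ[ℂ] A) (hT : ∀ m : M, T (DM m) = D (T m)) :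
    IsRB br DM rho T ↔
      ell2 (D.prodMap DM) (toC2 (sdBr br DM rho (fun _ _ => 0)))
        (hatC1 T) (hatC1 T) = 0 := by
  exact statement10' D br hL DM rho hM T hT

end LCAF
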